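/- Minor summation formula for hyperdeterminants: Let n ≥ 1 and k ≥ 1 be integers and let M, N be hypermatrices of order 2k and dimension n. Then Det(M + N) = ∑_{r=0}^n ∑_{(I,J) ∈ 𝔠ʳ} ε(I,J) · Det(M[I]) · Det(N[J]), where 𝔠ʳ is the set of pairs of 2k-tuples I = (I₁,…,I_{2k}), J = (J₁,…,J_{2k}) of subsets of {0,…,n−1} such that for each s, I_s and J_s are complementary with |I_s| = r and |J_s| = n − r; M[I] is the hypermatrix of order 2k and dimension r whose s-th index slot is restricted to I_s enumerated in increasing order (similarly N[J] has dimension n − r); and ε(I,J) = ∏_{s=1}^{2k} sign(σ_s), where σ_s is the permutation of {0,…,n−1} listing first the elements of I_s in increasing order and then those of J_s in increasing order. -/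

import Mathlib

open Nat

/-- The hyperdeterminant of a hypermatrix of order `m` and dimension `n`. -/
noncomputable def hypDet {m n : ℕ} (M : (Fin m → Fin n) → ℝ) : ℝ :=
  (1 / (n ! : ℝ)) * ∑ σ : Fin m → Equiv.Perm (Fin n),
    (∏ s, ((Equiv.Perm.sign (σ s) : ℤ) : ℝ)) * ∏ i, M fun s => σ s i

/-- The permutation of `{0,…,n-1}` listing first the elements of `A` in
increasing order and then those of its complement in increasing order. -/
def splitPerm {n r : ℕ} (A : Finset (Fin n)) (hA : A.card = r) : Equiv.Perm (Fin n) :=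
  ((finCongr (by
      have h : r ≤ n := by simpa [hA] using A.card_le_univ
      omega : n = r + (n - r))).trans
    finSumFinEquiv.symm).trans <|
  ((Equiv.sumCongr (A.orderIsoOfFin hA).toEquiv
      ((Aᶜ).orderIsoOfFin (by simp [Finset.card_compl, hA])).toEquiv).trans
    ((Equiv.sumCongr (Equiv.refl _)
      (Equiv.subtypeEquivRight (fun x => Finset.mem_compl))).trans
    (Equiv.sumCompl (· ∈ A))))

/-- The minor `M[I]` of a hypermatrix `M`, where the `s`-th index slot is
restricted to the subset `I s` (of cardinality `r`) enumerated increasingly. -/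
def hypMinor {m n r : ℕ} (M : (Fin m → Fin n) → ℝ)
    (I : Fin m → Finset (Fin n)) (hI : ∀ s, (I s).card = r) :
    (Fin m → Fin r) → ℝ :=
  fun t => M fun s => ((I s).orderIsoOfFin (hI s) (t s) : Fin n)


section
variable {n r : ℕ}

lemma card_compl_of_card {A : Finset (Fin n)} (hA : A.card = r) : (Aᶜ).card = n - r := by
  simp [Finset.card_compl, hA]

lemma le_of_card {A : Finset (Fin n)} (hA : A.card = r) : r ≤ n := by
  simpa [hA] using A.card_le_univ

lemma splitPerm_apply_low (A : Finset (Fin n)) (hA : A.card = r) (j : Fin n) (hj : j.val < r) :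
    splitPerm A hA j = (A.orderIsoOfFin hA ⟨j, hj⟩ : Fin n) := by
  unfold splitPerm
  have h1 : (finCongr (by have := le_of_card hA; omega : n = r + (n - r)) j) =
      Fin.castAdd (n - r) ⟨j.val, hj⟩ := by ext; simp
  simp only [Equiv.trans_apply, h1, finSumFinEquiv_symm_apply_castAdd]
  simp

lemma splitPerm_apply_high (A : Finset (Fin n)) (hA : A.card = r) (j : Fin n) (hj : r ≤ j.val) :
    splitPerm A hA j = ((Aᶜ).orderIsoOfFin (card_compl_of_card hA)
      ⟨j.val - r, by have := j.2; omega⟩ : Fin n) := by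
  unfold splitPerm
  have h1 : (finCongr (by have := le_of_card hA; omega : n = r + (n - r)) j) =
      Fin.natAdd r ⟨j.val - r, by have := j.2; omega⟩ := by ext; simp; omega
  simp only [Equiv.trans_apply, h1, finSumFinEquiv_symm_apply_natAdd]
  simp

end

section
variable {n r : ℕ}

/-- block permutation of `Fin n` from perms of `Fin r` and `Fin (n-r)` (when `r ≤ n`). -/
def sumPerm (h : r ≤ n) (τ : Equiv.Perm (Fin r)) (ρ : Equiv.Perm (Fin (n - r))) :
    Equiv.Perm (Fin n) :=
  (finSumFinEquiv.trans (finCongr (by omega : r + (n - r) = n))).permCongr (Equiv.sumCongr τ ρ)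

lemma sign_sumPerm (h : r ≤ n) (τ : Equiv.Perm (Fin r)) (ρ : Equiv.Perm (Fin (n - r))) :
    Equiv.Perm.sign (sumPerm h τ ρ) = Equiv.Perm.sign τ * Equiv.Perm.sign ρ := by
  rw [sumPerm, Equiv.Perm.sign_permCongr, Equiv.Perm.sign_sumCongr]

lemma sumPerm_apply_low (h : r ≤ n) (τ : Equiv.Perm (Fin r)) (ρ : Equiv.Perm (Fin (n - r)))
    (j : Fin n) (hj : j.val < r) :
    sumPerm h τ ρ j = ⟨(τ ⟨j, hj⟩ : Fin r).val, by have := (τ ⟨j, hj⟩).2; omega⟩ := by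
  unfold sumPerm
  have h1 : ((finSumFinEquiv.trans (finCongr (by omega : r + (n - r) = n))).symm j)
      = Sum.inl ⟨j, hj⟩ := by
    rw [Equiv.symm_apply_eq]
    ext; simp
  simp [Equiv.permCongr_apply, h1]
  ext; simp
  have h2 : finSumFinEquiv.symm (Fin.cast (by omega) j) =
      (Sum.inl ⟨j, hj⟩ : Fin r ⊕ Fin (n - r)) := h1
  rw [h2]; simp

lemma sumPerm_apply_high (h : r ≤ n) (τ : Equiv.Perm (Fin r)) (ρ : Equiv.Perm (Fin (n - r)))
    (j : Fin n) (hj : r ≤ j.val) :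
    sumPerm h τ ρ j = ⟨r + (ρ ⟨j.val - r, by have := j.2; omega⟩ : Fin (n - r)).val,
      by have := (ρ ⟨j.val - r, by have := j.2; omega⟩).2; omega⟩ := by
  unfold sumPerm
  have h1 : ((finSumFinEquiv.trans (finCongr (by omega : r + (n - r) = n))).symm j)
      = Sum.inr ⟨j.val - r, by have := j.2; omega⟩ := by
    rw [Equiv.symm_apply_eq]
    ext; simp; omega
  simp [Equiv.permCongr_apply, h1]
  ext; simp
  have h2 : finSumFinEquiv.symm (Fin.cast (by omega) j) =
      (Sum.inr ⟨j.val - r, by have := j.2; omega⟩ : Fin r ⊕ Fin (n - r)) := h1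
  rw [h2]; simp

end

section
variable {n r : ℕ}

lemma splitPerm_mem_iff (A : Finset (Fin n)) (hA : A.card = r) (j : Fin n) :
    splitPerm A hA j ∈ A ↔ j.val < r := by
  constructor
  · intro hm
    by_contra hc
    rw [splitPerm_apply_high A hA j (by omega)] at hm
    have h2 := ((Aᶜ).orderIsoOfFin (card_compl_of_card hA) ⟨j.val - r, by have := j.2; omega⟩).2
    rw [Finset.mem_compl] at h2
    exact h2 hm
  · intro hj
    rw [splitPerm_apply_low A hA j hj]
    exact (A.orderIsoOfFin hA ⟨j, hj⟩).2

/-- image of the first `r` elements under `σ`. -/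
def firstImage (h : r ≤ n) (σ : Equiv.Perm (Fin n)) : Finset (Fin n) :=
  Finset.image (fun j : Fin r => σ (Fin.castLE h j)) Finset.univ

lemma card_firstImage (h : r ≤ n) (σ : Equiv.Perm (Fin n)) : (firstImage h σ).card = r := by
  rw [firstImage, Finset.card_image_of_injective _
    (show Function.Injective fun j : Fin r => σ (Fin.castLE h j) from
      fun a b hab => Fin.castLE_injective h (σ.injective hab))]
  simp

lemma mem_firstImage (h : r ≤ n) (σ : Equiv.Perm (Fin n)) (x : Fin n) :
    x ∈ firstImage h σ ↔ (σ.symm x).val < r := by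
  simp only [firstImage, Finset.mem_image, Finset.mem_univ, true_and]
  constructor
  · rintro ⟨j, rfl⟩; simp
  · intro hx
    exact ⟨⟨(σ.symm x).val, hx⟩, by simp [Fin.castLE]⟩

/-- residual permutation after splitting off `firstImage`. -/
def resPerm (h : r ≤ n) (σ : Equiv.Perm (Fin n)) : Equiv.Perm (Fin n) :=
  (splitPerm (firstImage h σ) (card_firstImage h σ))⁻¹ * σ

lemma resPerm_lt (h : r ≤ n) (σ : Equiv.Perm (Fin n)) (j : Fin n) :
    (resPerm h σ j).val < r ↔ j.val < r := by
  have key : σ j ∈ firstImage h σ ↔ j.val < r := by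
    rw [mem_firstImage]; simp
  rw [← key]
  have : σ j = splitPerm (firstImage h σ) (card_firstImage h σ) (resPerm h σ j) := by
    simp [resPerm]
  rw [this, splitPerm_mem_iff]

/-- low block of the residual permutation. -/
noncomputable def lowPerm (h : r ≤ n) (σ : Equiv.Perm (Fin n)) : Equiv.Perm (Fin r) :=
  Equiv.ofBijective (fun j : Fin r =>
      (⟨(resPerm h σ (Fin.castLE h j)).val, by
        rw [resPerm_lt]; exact j.2⟩ : Fin r))
    (Finite.injective_iff_bijective.mp (by
      intro a b hab
      simp only [Fin.mk.injEq] at hab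
      have := (resPerm h σ).injective (Fin.val_injective (by exact hab))
      exact Fin.castLE_injective h this))

/-- high block of the residual permutation. -/
noncomputable def highPerm (h : r ≤ n) (σ : Equiv.Perm (Fin n)) : Equiv.Perm (Fin (n - r)) :=
  Equiv.ofBijective (fun j : Fin (n - r) =>
      (⟨(resPerm h σ ⟨r + j.val, by have := j.2; omega⟩).val - r, by
        have h1 : ¬ (resPerm h σ ⟨r + j.val, by have := j.2; omega⟩).val < r := by
          rw [resPerm_lt]; simp
        have h2 := (resPerm h σ ⟨r + j.val, by have := j.2; omega⟩).2
        omega⟩ : Fin (n - r)))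
    (Finite.injective_iff_bijective.mp (by
      intro a b hab
      simp only [Fin.mk.injEq] at hab
      have hra : ¬ (resPerm h σ ⟨r + a.val, by have := a.2; omega⟩).val < r := by
        rw [resPerm_lt]; simp
      have hrb : ¬ (resPerm h σ ⟨r + b.val, by have := b.2; omega⟩).val < r := by
        rw [resPerm_lt]; simp
      have heq : (resPerm h σ ⟨r + a.val, by have := a.2; omega⟩) =
          (resPerm h σ ⟨r + b.val, by have := b.2; omega⟩) := by
        apply Fin.val_injective; omega
      have h3 := congrArg Fin.val ((resPerm h σ).injective heq)
      simp only [] at h3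
      apply Fin.val_injective
      omega))


lemma splitPerm_congr {A B : Finset (Fin n)} (hA : A.card = r) (hB : B.card = r)
    (hAB : A = B) : splitPerm A hA = splitPerm B hB := by subst hAB; rfl

lemma splitPerm_apply_low' (A : Finset (Fin n)) (hA : A.card = r) (j : Fin n) (i : Fin r)
    (hji : j.val = i.val) :
    splitPerm A hA j = (A.orderIsoOfFin hA i : Fin n) := by
  rw [splitPerm_apply_low A hA j (hji ▸ i.2)]
  have : (⟨j.val, hji ▸ i.2⟩ : Fin r) = i := Fin.ext hji
  rw [this]

lemma splitPerm_apply_high' (A : Finset (Fin n)) (hA : A.card = r) (j : Fin n) (i : Fin (n - r))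
    (hji : j.val = r + i.val) :
    splitPerm A hA j = ((Aᶜ).orderIsoOfFin (card_compl_of_card hA) i : Fin n) := by
  rw [splitPerm_apply_high A hA j (by omega)]
  have : (⟨j.val - r, by have := j.2; omega⟩ : Fin (n - r)) = i := Fin.ext (by simp [hji])
  rw [this]

lemma sumPerm_apply_low' (h : r ≤ n) (τ : Equiv.Perm (Fin r)) (ρ : Equiv.Perm (Fin (n - r)))
    (j : Fin n) (i : Fin r) (hji : j.val = i.val) :
    sumPerm h τ ρ j = ⟨(τ i).val, by have := (τ i).2; omega⟩ := by
  rw [sumPerm_apply_low h τ ρ j (hji ▸ i.2)]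
  have : (⟨j.val, hji ▸ i.2⟩ : Fin r) = i := Fin.ext hji
  exact Fin.ext (by simp only [this])

lemma sumPerm_apply_high' (h : r ≤ n) (τ : Equiv.Perm (Fin r)) (ρ : Equiv.Perm (Fin (n - r)))
    (j : Fin n) (i : Fin (n - r)) (hji : j.val = r + i.val) :
    sumPerm h τ ρ j = ⟨r + (ρ i).val, by have := (ρ i).2; omega⟩ := by
  rw [sumPerm_apply_high h τ ρ j (by omega)]
  have : (⟨j.val - r, by have := j.2; omega⟩ : Fin (n - r)) = i := Fin.ext (by simp [hji])
  exact Fin.ext (by simp only [this])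

lemma phi_low (A : Finset (Fin n)) (hA : A.card = r) (h : r ≤ n)
    (τ : Equiv.Perm (Fin r)) (ρ : Equiv.Perm (Fin (n - r))) (j : Fin n) (i : Fin r)
    (hji : j.val = i.val) :
    (splitPerm A hA * sumPerm h τ ρ) j = (A.orderIsoOfFin hA (τ i) : Fin n) := by
  rw [Equiv.Perm.mul_apply, sumPerm_apply_low' h τ ρ j i hji,
    splitPerm_apply_low' A hA _ (τ i) rfl]

lemma phi_high (A : Finset (Fin n)) (hA : A.card = r) (h : r ≤ n)
    (τ : Equiv.Perm (Fin r)) (ρ : Equiv.Perm (Fin (n - r))) (j : Fin n) (i : Fin (n - r))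
    (hji : j.val = r + i.val) :
    (splitPerm A hA * sumPerm h τ ρ) j =
      ((Aᶜ).orderIsoOfFin (card_compl_of_card hA) (ρ i) : Fin n) := by
  rw [Equiv.Perm.mul_apply, sumPerm_apply_high' h τ ρ j i hji,
    splitPerm_apply_high' A hA _ (ρ i) rfl]

lemma firstImage_phi (A : Finset (Fin n)) (hA : A.card = r) (h : r ≤ n)
    (τ : Equiv.Perm (Fin r)) (ρ : Equiv.Perm (Fin (n - r))) :
    firstImage h (splitPerm A hA * sumPerm h τ ρ) = A := by
  apply Finset.eq_of_subset_of_card_le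
  · intro x hx
    rw [firstImage, Finset.mem_image] at hx
    obtain ⟨j, _, rfl⟩ := hx
    rw [phi_low A hA h τ ρ _ j (by simp [Fin.castLE])]
    exact (A.orderIsoOfFin hA (τ j)).2
  · rw [hA, card_firstImage]

lemma resPerm_phi (A : Finset (Fin n)) (hA : A.card = r) (h : r ≤ n)
    (τ : Equiv.Perm (Fin r)) (ρ : Equiv.Perm (Fin (n - r))) :
    resPerm h (splitPerm A hA * sumPerm h τ ρ) = sumPerm h τ ρ := by
  rw [resPerm, splitPerm_congr (card_firstImage h _) hA (firstImage_phi A hA h τ ρ)]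
  group


lemma phi_injective (h : r ≤ n) :
    Function.Injective (fun x : (Σ _A : {A : Finset (Fin n) // A.card = r},
        Equiv.Perm (Fin r) × Equiv.Perm (Fin (n - r))) =>
      splitPerm x.1.1 x.1.2 * sumPerm h x.2.1 x.2.2) := by
  rintro ⟨⟨A, hA⟩, τ, ρ⟩ ⟨⟨A', hA'⟩, τ', ρ'⟩ hx
  simp only at hx
  have hAA : A = A' := by
    rw [← firstImage_phi A hA h τ ρ, ← firstImage_phi A' hA' h τ' ρ', hx]
  subst hAA
  have hsum : sumPerm h τ ρ = sumPerm h τ' ρ' := by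
    have h2 := congrArg (fun z => (splitPerm A hA)⁻¹ * z) hx
    simpa [← mul_assoc, splitPerm_congr hA hA' rfl] using h2
  have hτ : τ = τ' := by
    apply Equiv.ext; intro i
    have h1 : sumPerm h τ ρ (Fin.castLE h i) = sumPerm h τ' ρ' (Fin.castLE h i) := by
      rw [hsum]
    rw [sumPerm_apply_low' h τ ρ (Fin.castLE h i) i (by simp [Fin.castLE]),
      sumPerm_apply_low' h τ' ρ' (Fin.castLE h i) i (by simp [Fin.castLE])] at h1
    simp only [Fin.mk.injEq] at h1
    exact Fin.ext h1
  have hρ : ρ = ρ' := by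
    apply Equiv.ext; intro i
    have hin : r + i.val < n := by have := i.2; omega
    have h1 : sumPerm h τ ρ ⟨r + i.val, hin⟩ = sumPerm h τ' ρ' ⟨r + i.val, hin⟩ := by
      rw [hsum]
    rw [sumPerm_apply_high' h τ ρ ⟨r + i.val, hin⟩ i rfl,
      sumPerm_apply_high' h τ' ρ' ⟨r + i.val, hin⟩ i rfl] at h1
    simp only [Fin.mk.injEq] at h1
    exact Fin.ext (by omega)
  rw [hτ, hρ]

lemma phi_surjective (h : r ≤ n) :
    Function.Surjective (fun x : (Σ _A : {A : Finset (Fin n) // A.card = r},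
        Equiv.Perm (Fin r) × Equiv.Perm (Fin (n - r))) =>
      splitPerm x.1.1 x.1.2 * sumPerm h x.2.1 x.2.2) := by
  intro σ
  refine ⟨⟨⟨firstImage h σ, card_firstImage h σ⟩, (lowPerm h σ, highPerm h σ)⟩, ?_⟩
  simp only
  have key : sumPerm h (lowPerm h σ) (highPerm h σ) = resPerm h σ := by
    apply Equiv.ext; intro j
    rcases lt_or_ge j.val r with hj | hj
    · rw [sumPerm_apply_low' h _ _ j ⟨j.val, hj⟩ rfl]
      apply Fin.val_injective
      show ((lowPerm h σ) ⟨j.val, hj⟩ : Fin r).val = _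
      show (resPerm h σ (Fin.castLE h ⟨j.val, hj⟩)).val = _
      congr 1
    · rw [sumPerm_apply_high' h _ _ j ⟨j.val - r, by have := j.2; omega⟩ (by simp; omega)]
      apply Fin.val_injective
      show r + ((highPerm h σ) ⟨j.val - r, _⟩ : Fin (n - r)).val = _
      have h3 : (⟨r + (j.val - r), by have := j.2; omega⟩ : Fin n) = j :=
        Fin.ext (by simp; omega)
      have h2 : ¬ (resPerm h σ ⟨r + (j.val - r), by have := j.2; omega⟩).val < r := by
        rw [resPerm_lt]; simp
      show r + ((resPerm h σ ⟨r + (j.val - r), by have := j.2; omega⟩).val - r) = _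
      rw [h3] at h2 ⊢
      omega
  rw [key, resPerm]
  group

/-- the decomposition of a permutation of `Fin n` into the image of the first `r`
elements together with a pair of block permutations. -/
noncomputable def permSplit (h : r ≤ n) :
    ((Σ _A : {A : Finset (Fin n) // A.card = r},
      Equiv.Perm (Fin r) × Equiv.Perm (Fin (n - r)))) ≃ Equiv.Perm (Fin n) :=
  Equiv.ofBijective _ ⟨phi_injective h, phi_surjective h⟩

lemma permSplit_apply (h : r ≤ n)
    (x : Σ _A : {A : Finset (Fin n) // A.card = r},
      Equiv.Perm (Fin r) × Equiv.Perm (Fin (n - r))) :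
    permSplit h x = splitPerm x.1.1 x.1.2 * sumPerm h x.2.1 x.2.2 := rfl

end

section steps
variable {m n r : ℕ}

lemma sign_cast_pow_even (p : Equiv.Perm (Fin n)) {m : ℕ} (hm : Even m) :
    (((Equiv.Perm.sign p : ℤ) : ℝ)) ^ m = 1 := by
  rcases Int.units_eq_one_or (Equiv.Perm.sign p) with h | h <;>
    simp [h, hm.neg_one_pow]

lemma prod_orderIsoOfFin {M : Type*} [CommMonoid M] (A : Finset (Fin n)) (hA : A.card = r)
    (g : Fin n → M) : ∏ i ∈ A, g i = ∏ j : Fin r, g (A.orderIsoOfFin hA j) := by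
  rw [← Finset.prod_coe_sort A g]
  exact (Fintype.prod_equiv (A.orderIsoOfFin hA).toEquiv _ _ (fun j => rfl)).symm

lemma step_A (hrn : r ≤ n) (hm : Even m) (M N : (Fin m → Fin n) → ℝ)
    (S : Finset (Fin n)) (hS : S.card = r) :
    ∑ σ : Fin m → Equiv.Perm (Fin n),
        (∏ s, ((Equiv.Perm.sign (σ s) : ℤ) : ℝ)) *
          ((∏ i ∈ S, M fun s => σ s i) * (∏ i ∈ Finset.univ \ S, N fun s => σ s i)) =
      ∑ σ : Fin m → Equiv.Perm (Fin n),
        (∏ s, ((Equiv.Perm.sign (σ s) : ℤ) : ℝ)) *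
          ((∏ j : Fin r, M fun s => σ s (Fin.castLE hrn j)) *
            (∏ j : Fin (n - r), N fun s => σ s ⟨r + j.val, by have := j.2; omega⟩)) := by
  classical
  set sp := splitPerm S hS with hsp
  rw [← Equiv.sum_comp (Equiv.piCongrRight fun _ : Fin m => Equiv.mulRight sp⁻¹)
    (fun σ => (∏ s, ((Equiv.Perm.sign (σ s) : ℤ) : ℝ)) *
      ((∏ i ∈ S, M fun s => σ s i) * (∏ i ∈ Finset.univ \ S, N fun s => σ s i)))]
  apply Finset.sum_congr rfl
  intro σ _
  have happ : ∀ (s : Fin m) (i : Fin n),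
      ((Equiv.piCongrRight fun _ : Fin m => Equiv.mulRight sp⁻¹) σ) s i = σ s (sp⁻¹ i) :=
    fun s i => rfl
  congr 1
  · -- sign part
    have h1 : ∀ s : Fin m,
        ((Equiv.Perm.sign (((Equiv.piCongrRight fun _ : Fin m =>
            Equiv.mulRight sp⁻¹) σ) s) : ℤ) : ℝ) =
          ((Equiv.Perm.sign (σ s) : ℤ) : ℝ) * ((Equiv.Perm.sign sp⁻¹ : ℤ) : ℝ) := by
      intro s
      show ((Equiv.Perm.sign (σ s * sp⁻¹) : ℤ) : ℝ) = _
      rw [map_mul]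
      push_cast
      rfl
    rw [Finset.prod_congr rfl (fun s _ => h1 s), Finset.prod_mul_distrib,
      Finset.prod_const, Finset.card_univ, Fintype.card_fin,
      sign_cast_pow_even _ hm, mul_one]
  · congr 1
    · -- M part
      rw [prod_orderIsoOfFin S hS]
      apply Finset.prod_congr rfl
      intro j _
      congr 1
      funext s
      rw [happ]
      congr 1
      have : sp (Fin.castLE hrn j) = (S.orderIsoOfFin hS j : Fin n) :=
        splitPerm_apply_low' S hS _ j rfl
      rw [← this]
      simp
    · -- N part
      rw [← Finset.compl_eq_univ_sdiff, prod_orderIsoOfFin Sᶜ (card_compl_of_card hS)]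
      apply Finset.prod_congr rfl
      intro j _
      congr 1
      funext s
      rw [happ]
      congr 1
      have : sp ⟨r + j.val, by have := j.2; omega⟩ =
          ((Sᶜ).orderIsoOfFin (card_compl_of_card hS) j : Fin n) :=
        splitPerm_apply_high' S hS _ j rfl
      rw [← this]
      simp

end steps

section stepB
variable {m n r : ℕ}

/-- the full reindexing equivalence for tuples of permutations. -/
noncomputable def bigSplit (h : r ≤ n) (m : ℕ) :
    ((Fin m → {A : Finset (Fin n) // A.card = r}) ×
      ((Fin m → Equiv.Perm (Fin r)) × (Fin m → Equiv.Perm (Fin (n - r))))) ≃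
      (Fin m → Equiv.Perm (Fin n)) :=
  ((Equiv.refl (Fin m → {A : Finset (Fin n) // A.card = r})).prodCongr
      (Equiv.arrowProdEquivProdArrow _ _ _).symm).trans <|
    (Equiv.arrowProdEquivProdArrow _ _ _).symm.trans <|
      Equiv.piCongrRight fun _ => (Equiv.sigmaEquivProd _ _).symm.trans (permSplit h)

lemma bigSplit_apply (h : r ≤ n) {m : ℕ}
    (I : Fin m → {A : Finset (Fin n) // A.card = r})
    (τ : Fin m → Equiv.Perm (Fin r)) (ρ : Fin m → Equiv.Perm (Fin (n - r))) (s : Fin m) :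
    bigSplit h m (I, (τ, ρ)) s = splitPerm (I s).1 (I s).2 * sumPerm h (τ s) (ρ s) := rfl

lemma step_B (hrn : r ≤ n) (hm : Even m) (M N : (Fin m → Fin n) → ℝ) :
    ∑ σ : Fin m → Equiv.Perm (Fin n),
        (∏ s, ((Equiv.Perm.sign (σ s) : ℤ) : ℝ)) *
          ((∏ j : Fin r, M fun s => σ s (Fin.castLE hrn j)) *
            (∏ j : Fin (n - r), N fun s => σ s ⟨r + j.val, by have := j.2; omega⟩)) =
      ∑ I : Fin m → {A : Finset (Fin n) // A.card = r},
        (∏ s, ((Equiv.Perm.sign (splitPerm (I s).1 (I s).2) : ℤ) : ℝ)) *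
          ((∑ τ : Fin m → Equiv.Perm (Fin r),
              (∏ s, ((Equiv.Perm.sign (τ s) : ℤ) : ℝ)) *
                ∏ j : Fin r, M fun s => ((I s).1.orderIsoOfFin (I s).2 (τ s j) : Fin n)) *
            (∑ ρ : Fin m → Equiv.Perm (Fin (n - r)),
              (∏ s, ((Equiv.Perm.sign (ρ s) : ℤ) : ℝ)) *
                ∏ j : Fin (n - r), N fun s =>
                  (((I s).1)ᶜ.orderIsoOfFin (card_compl_of_card (I s).2) (ρ s j) : Fin n))) := by
  classical
  rw [← Equiv.sum_comp (bigSplit hrn m)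
    (fun σ => (∏ s, ((Equiv.Perm.sign (σ s) : ℤ) : ℝ)) *
      ((∏ j : Fin r, M fun s => σ s (Fin.castLE hrn j)) *
        (∏ j : Fin (n - r), N fun s => σ s ⟨r + j.val, by have := j.2; omega⟩)))]
  rw [Fintype.sum_prod_type]
  apply Finset.sum_congr rfl
  intro I _
  rw [Fintype.sum_prod_type]
  rw [Finset.sum_mul_sum]
  rw [Finset.mul_sum]
  apply Finset.sum_congr rfl
  intro τ _
  rw [Finset.mul_sum]
  apply Finset.sum_congr rfl
  intro ρ _
  have hsgn : ∀ s : Fin m,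
      ((Equiv.Perm.sign ((bigSplit hrn m (I, (τ, ρ))) s) : ℤ) : ℝ) =
        ((Equiv.Perm.sign (splitPerm (I s).1 (I s).2) : ℤ) : ℝ) *
          (((Equiv.Perm.sign (τ s) : ℤ) : ℝ) * ((Equiv.Perm.sign (ρ s) : ℤ) : ℝ)) := by
    intro s
    rw [bigSplit_apply, map_mul, sign_sumPerm]
    push_cast
    ring
  have hM : ∀ j : Fin r,
      (M fun s => (bigSplit hrn m (I, (τ, ρ))) s (Fin.castLE hrn j)) =
        M fun s => ((I s).1.orderIsoOfFin (I s).2 (τ s j) : Fin n) := by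
    intro j
    congr 1
    funext s
    rw [bigSplit_apply, phi_low (I s).1 (I s).2 hrn (τ s) (ρ s) _ j rfl]
  have hN : ∀ j : Fin (n - r),
      (N fun s => (bigSplit hrn m (I, (τ, ρ))) s ⟨r + j.val, by have := j.2; omega⟩) =
        N fun s => (((I s).1)ᶜ.orderIsoOfFin (card_compl_of_card (I s).2) (ρ s j) : Fin n) := by
    intro j
    congr 1
    funext s
    rw [bigSplit_apply, phi_high (I s).1 (I s).2 hrn (τ s) (ρ s) _ j rfl]
  rw [Finset.prod_congr rfl (fun s _ => hsgn s), Finset.prod_mul_distrib,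
    Finset.prod_mul_distrib,
    Finset.prod_congr rfl (fun j _ => hM j), Finset.prod_congr rfl (fun j _ => hN j)]
  ring

end stepB

/-- Minor summation formula for hyperdeterminants:
`Det(M+N) = ∑_r ∑_{(I,J)} ε(I,J) Det(M[I]) Det(N[J])`, the inner sum being over
`2k`-tuples `I` of `r`-element subsets, with `J` the complementary tuple. -/
theorem hypDet_minor_summation (n k : ℕ) (hn : 1 ≤ n) (hk : 1 ≤ k)
    (M N : (Fin (2 * k) → Fin n) → ℝ) :
    hypDet (fun t => M t + N t) =
      ∑ r ∈ Finset.range (n + 1),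
        ∑ I ∈ (Finset.univ.filter
            (fun I : Fin (2 * k) → Finset (Fin n) => ∀ s, (I s).card = r)).attach,
          (∏ s, ((Equiv.Perm.sign
              (splitPerm (I.1 s) ((Finset.mem_filter.mp I.2).2 s)) : ℤ) : ℝ)) *
            hypDet (hypMinor M I.1 (Finset.mem_filter.mp I.2).2) *
            hypDet (hypMinor (r := n - r) N (fun s => (I.1 s)ᶜ)
              (fun s => by
                simp [Finset.card_compl, (Finset.mem_filter.mp I.2).2 s])) := by
  classical
  have hm : Even (2 * k) := even_two_mul k
  rw [hypDet]
  have e1 : ∑ σ : Fin (2 * k) → Equiv.Perm (Fin n),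
        (∏ s, ((Equiv.Perm.sign (σ s) : ℤ) : ℝ)) *
          ∏ i, ((fun t => M t + N t) fun s => σ s i)
      = ∑ S ∈ (Finset.univ : Finset (Fin n)).powerset,
          ∑ σ : Fin (2 * k) → Equiv.Perm (Fin n),
            (∏ s, ((Equiv.Perm.sign (σ s) : ℤ) : ℝ)) *
              ((∏ i ∈ S, M fun s => σ s i) *
                (∏ i ∈ Finset.univ \ S, N fun s => σ s i)) := by
    rw [Finset.sum_comm]
    apply Finset.sum_congr rfl
    intro σ _
    simp only
    rw [Finset.prod_add, Finset.mul_sum]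
  rw [e1, Finset.sum_powerset]
  simp only [Finset.card_univ, Fintype.card_fin]
  rw [Finset.mul_sum]
  apply Finset.sum_congr rfl
  intro r hr
  have hrn : r ≤ n := by
    rw [Finset.mem_range] at hr; omega
  -- left side: collapse sum over S
  have hA : ∀ S ∈ Finset.powersetCard r (Finset.univ : Finset (Fin n)),
      (∑ σ : Fin (2 * k) → Equiv.Perm (Fin n),
        (∏ s, ((Equiv.Perm.sign (σ s) : ℤ) : ℝ)) *
          ((∏ i ∈ S, M fun s => σ s i) *
            (∏ i ∈ Finset.univ \ S, N fun s => σ s i)))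
      = ∑ σ : Fin (2 * k) → Equiv.Perm (Fin n),
          (∏ s, ((Equiv.Perm.sign (σ s) : ℤ) : ℝ)) *
            ((∏ j : Fin r, M fun s => σ s (Fin.castLE hrn j)) *
              (∏ j : Fin (n - r), N fun s => σ s ⟨r + j.val, by have := j.2; omega⟩)) := by
    intro S hS
    exact step_A hrn hm M N S (Finset.mem_powersetCard_univ.mp hS)
  rw [Finset.sum_congr rfl hA, Finset.sum_const, Finset.card_powersetCard,
    Finset.card_univ]
  simp only [Fintype.card_fin]
  rw [nsmul_eq_mul, step_B hrn hm M N]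
  -- right side: convert attached sum to a sum over a pi type
  have hRHS : (∑ I ∈ (Finset.univ.filter
            (fun I : Fin (2 * k) → Finset (Fin n) => ∀ s, (I s).card = r)).attach,
          (∏ s, ((Equiv.Perm.sign
              (splitPerm (I.1 s) ((Finset.mem_filter.mp I.2).2 s)) : ℤ) : ℝ)) *
            hypDet (hypMinor M I.1 (Finset.mem_filter.mp I.2).2) *
            hypDet (hypMinor (r := n - r) N (fun s => (I.1 s)ᶜ)
              (fun s => by
                simp [Finset.card_compl, (Finset.mem_filter.mp I.2).2 s])))
      = ∑ I : Fin (2 * k) → {A : Finset (Fin n) // A.card = r},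
          (∏ s, ((Equiv.Perm.sign (splitPerm (I s).1 (I s).2) : ℤ) : ℝ)) *
            ((1 / (r ! : ℝ)) * ∑ τ : Fin (2 * k) → Equiv.Perm (Fin r),
              (∏ s, ((Equiv.Perm.sign (τ s) : ℤ) : ℝ)) *
                ∏ j : Fin r, M fun s => ((I s).1.orderIsoOfFin (I s).2 (τ s j) : Fin n)) *
            ((1 / ((n - r)! : ℝ)) * ∑ ρ : Fin (2 * k) → Equiv.Perm (Fin (n - r)),
              (∏ s, ((Equiv.Perm.sign (ρ s) : ℤ) : ℝ)) *
                ∏ j : Fin (n - r), N fun s =>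
                  (((I s).1)ᶜ.orderIsoOfFin (card_compl_of_card (I s).2) (ρ s j) : Fin n)) := by
    rw [← Finset.univ_eq_attach]
    apply Fintype.sum_equiv ((Equiv.subtypeEquivRight (fun x => by
        simp)).trans (Equiv.subtypePiEquivPi
          (p := fun (s : Fin (2 * k)) (A : Finset (Fin n)) => A.card = r)))
    intro x
    rfl
  rw [hRHS]
  rw [Finset.mul_sum, Finset.mul_sum]
  apply Finset.sum_congr rfl
  intro I _
  have hr0 : ((r ! : ℝ)) ≠ 0 := by positivity
  have hnr0 : (((n - r)! : ℝ)) ≠ 0 := by positivity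
  have hn0 : ((n ! : ℝ)) ≠ 0 := by positivity
  have hfact : ((n.choose r : ℝ)) * (r ! : ℝ) * ((n - r)! : ℝ) = (n ! : ℝ) := by
    exact_mod_cast Nat.choose_mul_factorial_mul_factorial hrn
  field_simp
  rw [← hfact]
  ring
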